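/- arXiv:1809.08743 — 5 statements merged into one kernel-verified Lean document; each statement's English description precedes it below -/
import Mathlib

section
/- A square matrix x over a field k is cyclic if and only if the centralizer of x in M_n(k) is commutative. -/
/-- A matrix `x` is cyclic if some vector `v` is such that
`v, x v, …, x^(n-1) v` form a basis of `k^n`. -/
def Matrix.IsCyclic {n : ℕ} {R : Type*} [CommRing R]
    (x : Matrix (Fin n) (Fin n) R) : Prop :=
  ∃ (v : Fin n → R) (b : Module.Basis (Fin n) R (Fin n → R)),
    ∀ i : Fin n, b i = (x ^ (i : ℕ)).mulVec v

open Polynomial Module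
open scoped DirectSum

section Aux

variable {n : ℕ} {k : Type*} [Field k]

/-- If every vector is `p(x) w` for some polynomial `p`, then `x` is cyclic. -/
theorem isCyclic_of_forall_exists_aeval (x : Matrix (Fin n) (Fin n) k) (w : Fin n → k)
    (hw : ∀ u : Fin n → k, ∃ P : k[X], (aeval x P).mulVec w = u) : x.IsCyclic := by
  classical
  let F := Matrix.toLinAlgEquiv' (R := k) (n := Fin n)
  let f : (Fin n → k) →ₗ[k] (Fin n → k) := F x
  have hmv : ∀ (y : Matrix (Fin n) (Fin n) k) (u : Fin n → k), y.mulVec u = F y u :=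
    fun y u => (Matrix.toLinAlgEquiv'_apply y u).symm
  have hpow : ∀ (m : ℕ) (u : Fin n → k), (x ^ m).mulVec u = (f ^ m) u := by
    intro m u; rw [hmv, map_pow]
  let g : Fin n → (Fin n → k) := fun i => (x ^ (i : ℕ)).mulVec w
  set W : Submodule k (Fin n → k) := Submodule.span k (Set.range g) with hWdef
  have key : ∀ m : ℕ, (f ^ m) w ∈ W := by
    intro m
    induction m using Nat.strong_induction_on with
    | _ m ih =>
      rcases lt_or_ge m n with hm | hm
      · refine Submodule.subset_span ⟨⟨m, hm⟩, ?_⟩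
        show (x ^ m).mulVec w = _
        rw [hpow]
      · have h0 : aeval f x.charpoly = 0 := by
          show aeval (F x) x.charpoly = 0
          rw [aeval_algHom_apply, Matrix.aeval_self_charpoly, map_zero]
        have hdeg : x.charpoly.natDegree = n := by
          simpa using x.charpoly_natDegree_eq_dim
        have hsum : (0 : (Fin n → k) →ₗ[k] (Fin n → k))
            = ∑ i ∈ Finset.range (n + 1), x.charpoly.coeff i • f ^ i := by
          rw [← h0, aeval_eq_sum_range, hdeg]
        rw [Finset.sum_range_succ] at hsum
        have hc : x.charpoly.coeff n = 1 := by
          have := x.charpoly_monic.coeff_natDegree; rwa [hdeg] at this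
        rw [hc, one_smul] at hsum
        have hfn : (f ^ n : (Fin n → k) →ₗ[k] (Fin n → k))
            = -∑ i ∈ Finset.range n, x.charpoly.coeff i • f ^ i := by
          rw [eq_neg_iff_add_eq_zero, add_comm]
          exact hsum.symm
        have hmw : (f ^ m) w
            = -∑ i ∈ Finset.range n, x.charpoly.coeff i • (f ^ (m - n + i)) w := by
          have : (f ^ m) = f ^ (m - n) * f ^ n := by rw [← pow_add]; congr 1; omega
          rw [this, Module.End.mul_apply, hfn]
          simp only [LinearMap.neg_apply, LinearMap.sum_apply, LinearMap.smul_apply,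
            map_neg, map_sum, map_smul]
          congr 1
          refine Finset.sum_congr rfl fun i _ => ?_
          rw [← Module.End.mul_apply, ← pow_add]
        rw [hmw]
        refine neg_mem (Submodule.sum_mem _ fun i hi => Submodule.smul_mem _ _ (ih _ ?_))
        have := Finset.mem_range.mp hi
        omega
  have hWtop : ⊤ ≤ W := by
    intro u _
    obtain ⟨P, hP⟩ := hw u
    have : u = (aeval f P) w := by
      rw [← hP, hmv, ← aeval_algHom_apply]
    rw [this, aeval_eq_sum_range]
    simp only [LinearMap.sum_apply, LinearMap.smul_apply]
    exact Submodule.sum_mem _ fun i _ => Submodule.smul_mem _ _ (key i)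
  have hcard : Fintype.card (Fin n) = Module.finrank k (Fin n → k) := by
    simp [Module.finrank_fin_fun]
  refine ⟨w, basisOfTopLeSpanOfCardEqFinrank g hWtop hcard, fun i => ?_⟩
  rw [coe_basisOfTopLeSpanOfCardEqFinrank]

end Aux

section Aux2
variable {n : ℕ} {k : Type*} [Field k]

theorem commutes_of_isCyclic (x : Matrix (Fin n) (Fin n) k) (hx : x.IsCyclic)
    (y z : Matrix (Fin n) (Fin n) k) (hxy : x * y = y * x) (hxz : x * z = z * x) :
    y * z = z * y := by
  classical
  obtain ⟨v, b, hb⟩ := hx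
  let F := Matrix.toLinAlgEquiv' (R := k) (n := Fin n)
  let f : (Fin n → k) →ₗ[k] (Fin n → k) := F x
  have hmv : ∀ (y : Matrix (Fin n) (Fin n) k) (u : Fin n → k), y.mulVec u = F y u :=
    fun y u => (Matrix.toLinAlgEquiv'_apply y u).symm
  have hbv : ∀ i : Fin n, b i = (f ^ (i : ℕ)) v := by
    intro i; rw [hb i, hmv, map_pow]
  have key : ∀ w : Matrix (Fin n) (Fin n) k, x * w = w * x →
      ∃ P : k[X], F w = aeval f P := by
    intro w hxw
    have hfw : f * F w = F w * f := by
      rw [show f = F x from rfl, ← map_mul, ← map_mul, hxw]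
    set c : Fin n → k := fun j => b.repr (F w v) j with hcdef
    have hrepr : F w v = ∑ j : Fin n, c j • (f ^ (j : ℕ)) v := by
      conv_lhs => rw [← Basis.sum_repr b (F w v)]
      exact Finset.sum_congr rfl fun j _ => by rw [hbv j]
    refine ⟨∑ j : Fin n, C (c j) * X ^ (j : ℕ), b.ext fun i => ?_⟩
    have haev : aeval f (∑ j : Fin n, C (c j) * X ^ (j : ℕ))
        = ∑ j : Fin n, c j • f ^ (j : ℕ) := by
      rw [map_sum]
      refine Finset.sum_congr rfl fun j _ => ?_
      rw [map_mul, aeval_C, aeval_X_pow, Algebra.smul_def]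
    rw [haev, hbv i]
    have hcomm : F w ((f ^ (i : ℕ)) v) = (f ^ (i : ℕ)) (F w v) := by
      have h2 : F w * f ^ (i : ℕ) = f ^ (i : ℕ) * F w :=
        (Commute.pow_right (Commute.symm hfw) (i : ℕ)).eq
      rw [← Module.End.mul_apply, h2, Module.End.mul_apply]
    calc F w ((f ^ (i : ℕ)) v) = (f ^ (i : ℕ)) (F w v) := hcomm
      _ = (f ^ (i : ℕ)) (∑ j : Fin n, c j • (f ^ (j : ℕ)) v) := by rw [hrepr]
      _ = ∑ j : Fin n, c j • (f ^ (i : ℕ)) ((f ^ (j : ℕ)) v) := by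
          rw [map_sum]; simp only [map_smul]
      _ = ∑ j : Fin n, c j • (f ^ (j : ℕ)) ((f ^ (i : ℕ)) v) := by
          refine Finset.sum_congr rfl fun j _ => ?_
          rw [← Module.End.mul_apply, ← Module.End.mul_apply, pow_mul_comm]
      _ = (∑ j : Fin n, c j • f ^ (j : ℕ)) ((f ^ (i : ℕ)) v) := by
          simp [LinearMap.sum_apply]
  obtain ⟨P, hP⟩ := key y hxy
  obtain ⟨Q, hQ⟩ := key z hxz
  apply F.injective
  rw [map_mul, map_mul, hP, hQ, ← map_mul, ← map_mul, mul_comm]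

end Aux2


set_option maxHeartbeats 2000000

/-- A matrix over a field is cyclic iff its centralizer in `M_n(k)` is
commutative. -/
theorem cyclic_iff_centralizer_commutative {n : ℕ} {k : Type*} [Field k]
    (x : Matrix (Fin n) (Fin n) k) :
    x.IsCyclic ↔
      ∀ y z : Matrix (Fin n) (Fin n) k,
        x * y = y * x → x * z = z * x → y * z = z * y := by
  constructor
  · exact fun hx y z => commutes_of_isCyclic x hx y z
  · intro hcomm
    classical
    let F := Matrix.toLinAlgEquiv' (R := k) (n := Fin n)
    let f : (Fin n → k) →ₗ[k] (Fin n → k) := F x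
    have hmv : ∀ (y : Matrix (Fin n) (Fin n) k) (u : Fin n → k), y.mulVec u = F y u :=
      fun y u => (Matrix.toLinAlgEquiv'_apply y u).symm
    obtain ⟨ι, hfin, p, hp, e, ⟨E⟩⟩ :=
      Module.equiv_directSum_of_isTorsion (R := k[X]) (M := Module.AEval' f)
        (Module.AEval.isTorsion_of_finiteDimensional k (Fin n → k) f)
    set β : ι → Type _ := fun l => k[X] ⧸ (Submodule.span k[X] {p l ^ e l}) with hβ
    -- transfer of k[X]-endomorphisms of AEval' f to matrices in the centralizer
    set oF : (Fin n → k) ≃ₗ[k] Module.AEval' f := Module.AEval'.of f with hoF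
    have transfer : ∀ G : Module.AEval' f →ₗ[k[X]] Module.AEval' f,
        ∃ y : Matrix (Fin n) (Fin n) k, x * y = y * x ∧
          ∀ u : Fin n → k, F y u = oF.symm (G (oF u)) := by
      intro G
      set g : (Fin n → k) →ₗ[k] (Fin n → k) :=
        oF.symm.toLinearMap ∘ₗ (G.restrictScalars k) ∘ₗ oF.toLinearMap with hg
      refine ⟨F.symm g, ?_, ?_⟩
      · apply F.injective
        rw [map_mul, map_mul, F.apply_symm_apply]
        apply LinearMap.ext
        intro u
        show f (g u) = g (f u)
        have h1 : g (f u) = oF.symm (G ((X : k[X]) • oF u)) := by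
          simp only [hg, LinearMap.coe_comp, Function.comp_apply, LinearEquiv.coe_coe,
            LinearMap.coe_restrictScalars]
          rw [Module.AEval'.X_smul_of]
        rw [h1, map_smul, Module.AEval.of_symm_smul, aeval_X]
        rfl
      · intro u
        rw [F.apply_symm_apply]
        rfl
    by_cases hbad : ∃ i j : ι, i ≠ j ∧ e i ≠ 0 ∧ e j ≠ 0 ∧ p i ∣ p j
    · exfalso
      obtain ⟨i, j, hij, hei, hej, hdvd⟩ := hbad
      set c : k[X] := p j ^ (e j - min (e i) (e j)) with hcdef
      have hdvd2 : p j ^ e j ∣ p i ^ e i * c := by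
        have h1 : Associated (p i ^ e i) (p j ^ e i) :=
          ((hp i).associated_of_dvd (hp j) hdvd).pow_pow
        have h2 : p j ^ e j ∣ p j ^ e i * c := by
          rw [hcdef, ← pow_add]
          exact pow_dvd_pow _ (by omega)
        exact (Associated.dvd_iff_dvd_right (h1.mul_right c)).mpr h2
      have hcne : (Submodule.Quotient.mk c : β j) ≠ 0 := by
        intro h
        rw [Submodule.Quotient.mk_eq_zero, Submodule.mem_span_singleton] at h
        obtain ⟨s, hs⟩ := h
        have hd : p j ^ e j ∣ c := ⟨s, by rw [← hs, smul_eq_mul, mul_comm]⟩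
        rw [hcdef, pow_dvd_pow_iff (hp j).ne_zero (hp j).not_isUnit] at hd
        omega
      -- the map ψ : β i → β j, mk r ↦ mk (r * c)
      set ψ : β i →ₗ[k[X]] β j :=
        Submodule.mapQ _ _ (LinearMap.toSpanSingleton k[X] k[X] c) (by
          intro z hz
          rw [Submodule.mem_span_singleton] at hz
          obtain ⟨s, rfl⟩ := hz
          rw [Submodule.mem_comap, LinearMap.toSpanSingleton_apply,
            Submodule.mem_span_singleton]
          obtain ⟨d, hd⟩ := hdvd2
          refine ⟨s * d, ?_⟩
          simp only [smul_eq_mul]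
          linear_combination (-s) * hd) with hψ
      have hψ1 : ψ (Submodule.Quotient.mk 1) = Submodule.Quotient.mk c := by
        rw [hψ, Submodule.mapQ_apply, LinearMap.toSpanSingleton_apply, one_smul]
      set G1 : (⨁ l, β l) →ₗ[k[X]] (⨁ l, β l) :=
        (DirectSum.lof k[X] ι β i) ∘ₗ (DirectSum.component k[X] ι β i) with hG1
      set G2 : (⨁ l, β l) →ₗ[k[X]] (⨁ l, β l) :=
        (DirectSum.lof k[X] ι β j) ∘ₗ ψ ∘ₗ (DirectSum.component k[X] ι β i) with hG2
      set d0 : ⨁ l, β l := DirectSum.lof k[X] ι β i (Submodule.Quotient.mk 1) with hd0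
      have hG1d0 : G1 d0 = d0 := by
        rw [hG1, hd0, LinearMap.comp_apply, DirectSum.component.lof_self]
      have hG2d0 : G2 d0 = DirectSum.lof k[X] ι β j (Submodule.Quotient.mk c) := by
        rw [hG2, hd0, LinearMap.comp_apply, LinearMap.comp_apply,
          DirectSum.component.lof_self, hψ1]
      have hne : G1 (G2 d0) ≠ G2 (G1 d0) := by
        rw [hG1d0, hG2d0]
        rw [hG1, LinearMap.comp_apply]
        have : DirectSum.component k[X] ι β i (DirectSum.lof k[X] ι β j (Submodule.Quotient.mk c)) = 0 := by
          rw [DirectSum.component.of, dif_neg hij.symm]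
        rw [this, map_zero]
        intro h
        apply hcne
        have := congrArg (DirectSum.component k[X] ι β j) h
        rw [map_zero, DirectSum.component.lof_self] at this
        exact this.symm
      -- conjugate through E
      obtain ⟨y, hxy, hy⟩ := transfer (E.symm.toLinearMap ∘ₗ G1 ∘ₗ E.toLinearMap)
      obtain ⟨z, hxz, hz⟩ := transfer (E.symm.toLinearMap ∘ₗ G2 ∘ₗ E.toLinearMap)
      have hYw : ∀ w, F y (oF.symm (E.symm w)) = oF.symm (E.symm (G1 w)) := by
        intro w
        rw [hy]
        simp only [LinearMap.comp_apply, LinearEquiv.coe_coe, LinearEquiv.apply_symm_apply]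
      have hZw : ∀ w, F z (oF.symm (E.symm w)) = oF.symm (E.symm (G2 w)) := by
        intro w
        rw [hz]
        simp only [LinearMap.comp_apply, LinearEquiv.coe_coe, LinearEquiv.apply_symm_apply]
      have hyz := hcomm y z hxy hxz
      have hFyz : F y * F z = F z * F y := by rw [← map_mul, ← map_mul, hyz]
      have happ : F y (F z (oF.symm (E.symm d0))) = F z (F y (oF.symm (E.symm d0))) := by
        rw [← Module.End.mul_apply, ← Module.End.mul_apply, hFyz]
      rw [hZw d0, hYw (G2 d0), hYw d0, hZw (G1 d0)] at happ
      exact hne (E.symm.injective (oF.symm.injective happ))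
    · push_neg at hbad
      set v : ⨁ l, β l := ∑ l : ι, DirectSum.lof k[X] ι β l (Submodule.Quotient.mk 1) with hv
      have hspan : ∀ d : ⨁ l, β l, d ∈ Submodule.span k[X] {v} := by
        intro d
        induction d using DirectSum.induction_on with
        | zero => exact Submodule.zero_mem _
        | add d1 d2 h1 h2 => exact Submodule.add_mem _ h1 h2
        | of j b =>
          obtain ⟨t, rfl⟩ := Submodule.Quotient.mk_surjective _ b
          rw [← DirectSum.lof_eq_of k[X]]
          set r : k[X] := ∏ l ∈ Finset.univ.erase j, p l ^ e l with hr
          have hcop : IsCoprime r (p j ^ e j) := by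
            rw [hr]
            refine IsCoprime.prod_left fun l hl => ?_
            by_cases h1 : e l = 0
            · rw [h1, pow_zero]; exact isCoprime_one_left
            by_cases h2 : e j = 0
            · rw [h2, pow_zero]; exact isCoprime_one_right
            exact (((hp l).coprime_iff_not_dvd).mpr
              (hbad l j (Finset.ne_of_mem_erase hl) h1 h2)).pow
          obtain ⟨a, b', hab⟩ := hcop
          have hzero : ∀ l ∈ Finset.univ, l ≠ j →
              (t * a * r) • DirectSum.lof k[X] ι β l (Submodule.Quotient.mk 1) = 0 := by
            intro l _ hlj
            rw [← map_smul]
            have hml : ((t * a * r) • Submodule.Quotient.mk (1 : k[X]) : β l) = 0 := by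
              rw [← Submodule.Quotient.mk_smul, smul_eq_mul, mul_one,
                Submodule.Quotient.mk_eq_zero, Submodule.mem_span_singleton]
              have hdl : p l ^ e l ∣ t * a * r := by
                refine Dvd.dvd.mul_left ?_ (t * a)
                rw [hr]
                exact Finset.dvd_prod_of_mem _ (Finset.mem_erase.mpr ⟨hlj, Finset.mem_univ l⟩)
              obtain ⟨s, hs⟩ := hdl
              exact ⟨s, by rw [smul_eq_mul, mul_comm, ← hs]⟩
            rw [hml, map_zero]
          have hkey : (t * a * r) • v
              = DirectSum.lof k[X] ι β j (Submodule.Quotient.mk t) := by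
            rw [hv, Finset.smul_sum, Finset.sum_eq_single_of_mem j (Finset.mem_univ j) hzero,
              ← map_smul]
            congr 1
            rw [← Submodule.Quotient.mk_smul, smul_eq_mul, mul_one, Submodule.Quotient.eq,
              Submodule.mem_span_singleton]
            exact ⟨-(t * b'), by simp only [smul_eq_mul]; linear_combination (-t) * hab⟩
          rw [← hkey]
          exact Submodule.smul_mem _ _ (Submodule.mem_span_singleton_self v)
      apply isCyclic_of_forall_exists_aeval x (oF.symm (E.symm v))
      intro u
      obtain ⟨P, hP⟩ := Submodule.mem_span_singleton.mp (hspan (E (oF u)))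
      refine ⟨P, ?_⟩
      have h1 : P • (E.symm v) = oF u := by
        have := congrArg E.symm hP
        rwa [map_smul, LinearEquiv.symm_apply_apply] at this
      have h2 : aeval f P • (oF.symm (E.symm v)) = u := by
        have := congrArg oF.symm h1
        rwa [Module.AEval.of_symm_smul, LinearEquiv.symm_apply_apply] at this
      rw [hmv, ← h2, ← aeval_algHom_apply]
      rfl
end

section
/- Any two a-regular matrices over a commutative local ring R that are conjugate by an element of GL_n(R) are equal; equivalently, for fixed unit a, an a-regular matrix is determined up to equality by its characteristic polynomial, so each similarity class contains at most one a-regular element. -/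
/-- An `a`-regular matrix: subdiagonal entries `(a, 1, 1, …, 1)`, arbitrary
last column, zeros elsewhere. -/
def Matrix.IsAReg {n : ℕ} {R : Type*} [CommRing R] (a : R)
    (x : Matrix (Fin n) (Fin n) R) : Prop :=
  ∀ i j : Fin n, (j : ℕ) + 1 < n →
    x i j = if (i : ℕ) = (j : ℕ) + 1 then (if (j : ℕ) = 0 then a else 1) else 0

open Matrix Finset

private lemma smul_cancel' {R : Type*} [CommRing R] {c : R} (hc : IsUnit c)
    {M : Type*} [AddCommGroup M] [Module R M] {v w : M} (h : c • v = c • w) : v = w := by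
  obtain ⟨u, rfl⟩ := hc
  have := congrArg (fun z => (↑u⁻¹ : R) • z) h
  simpa [smul_smul] using this

private lemma mulVec_sum' {n m : ℕ} {R : Type*} [CommRing R]
    (M : Matrix (Fin n) (Fin n) R) (v : Fin m → Fin n → R) :
    M *ᵥ (∑ j, v j) = ∑ j, M *ᵥ (v j) := by
  ext i
  simp only [Matrix.mulVec, dotProduct, Finset.sum_apply, Finset.mul_sum]
  rw [Finset.sum_comm]

private lemma sum_mulVec' {n m : ℕ} {R : Type*} [CommRing R]
    (M : Fin m → Matrix (Fin n) (Fin n) R) (v : Fin n → R) :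
    (∑ j, M j) *ᵥ v = ∑ j, (M j) *ᵥ v := by
  ext i
  simp only [Matrix.mulVec, dotProduct, Finset.sum_apply, Matrix.sum_apply,
    Finset.sum_mul]
  rw [Finset.sum_comm]

private lemma aReg_col {n : ℕ} {R : Type*} [CommRing R] {a : R}
    {x : Matrix (Fin n) (Fin n) R} (hx : x.IsAReg a)
    (jv : ℕ) (hj : jv < n) (hj1 : jv + 1 < n) :
    x *ᵥ Pi.single (⟨jv, hj⟩ : Fin n) 1
      = (if jv = 0 then a else 1) • (Pi.single (⟨jv + 1, hj1⟩ : Fin n) 1 : Fin n → R) := by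
  funext i
  simp only [Matrix.mulVec_single_one, Matrix.col_apply, mul_one, Pi.smul_apply, smul_eq_mul]
  rw [hx i ⟨jv, hj⟩ hj1]
  rcases eq_or_ne (i : ℕ) (jv + 1) with h | h
  · have hi : i = (⟨jv + 1, hj1⟩ : Fin n) := Fin.ext h
    rw [if_pos h, hi, Pi.single_eq_same, mul_one]
  · have hi : i ≠ (⟨jv + 1, hj1⟩ : Fin n) := fun hc => h (by rw [hc])
    rw [if_neg h, Pi.single_eq_of_ne hi, mul_zero]

private lemma aReg_key {n : ℕ} {R : Type*} [CommRing R] {a : R}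
    {x y h : Matrix (Fin n) (Fin n) R} (hx : x.IsAReg a)
    (hcomm : h * x = y * h) (hn : 0 < n) :
    ∀ (jv : ℕ) (hj : jv < n),
      (y ^ jv) *ᵥ (h *ᵥ Pi.single (⟨0, hn⟩ : Fin n) 1)
        = (if jv = 0 then (1 : R) else a) • (h *ᵥ Pi.single (⟨jv, hj⟩ : Fin n) 1) := by
  intro jv
  induction jv with
  | zero => intro hj; simp
  | succ k ih =>
    intro hj
    have hk : k < n := Nat.lt_of_succ_lt hj
    rw [pow_succ', ← Matrix.mulVec_mulVec, ih hk, Matrix.mulVec_smul,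
      Matrix.mulVec_mulVec, ← hcomm, ← Matrix.mulVec_mulVec,
      aReg_col hx k hk hj, Matrix.mulVec_smul, smul_smul]
    congr 1
    rcases Nat.eq_zero_or_pos k with h0 | h0
    · simp [h0]
    · simp [Nat.pos_iff_ne_zero.mp h0]

private lemma aReg_rel {n : ℕ} {R : Type*} [CommRing R] {a : R}
    {x y h : Matrix (Fin n) (Fin n) R} (hx : x.IsAReg a)
    (hcomm : h * x = y * h) (hn : 0 < n) :
    a • ((y ^ n) *ᵥ (h *ᵥ Pi.single (⟨0, hn⟩ : Fin n) 1))
      = (if n - 1 = 0 then (1 : R) else a) •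
          ∑ j : Fin n, ((x j ⟨n - 1, Nat.sub_lt hn one_pos⟩ * (if (j : ℕ) = 0 then a else 1)) •
            ((y ^ (j : ℕ)) *ᵥ (h *ᵥ Pi.single (⟨0, hn⟩ : Fin n) 1))) := by
  have hsub : n - 1 < n := Nat.sub_lt hn one_pos
  have hn1 : n - 1 + 1 = n := Nat.succ_pred_eq_of_pos hn
  have hyn : y ^ n = y * y ^ (n - 1) := by
    have := pow_succ' y (n - 1)
    rw [hn1] at this
    exact this
  have step1 : (y ^ n) *ᵥ (h *ᵥ Pi.single (⟨0, hn⟩ : Fin n) 1)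
      = (if n - 1 = 0 then (1 : R) else a) •
          (h *ᵥ (x *ᵥ Pi.single (⟨n - 1, hsub⟩ : Fin n) 1)) := by
    rw [hyn, ← Matrix.mulVec_mulVec, aReg_key hx hcomm hn (n - 1) hsub,
      Matrix.mulVec_smul, Matrix.mulVec_mulVec, ← hcomm, ← Matrix.mulVec_mulVec]
  have hcol : x *ᵥ Pi.single (⟨n - 1, hsub⟩ : Fin n) 1
      = ∑ j : Fin n, (x j ⟨n - 1, hsub⟩) • (Pi.single j 1 : Fin n → R) := by
    rw [Matrix.mulVec_single_one]
    funext i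
    rw [Finset.sum_apply]
    simp only [Pi.smul_apply, smul_eq_mul, Pi.single_apply, mul_ite, mul_one, mul_zero,
      Matrix.transpose_apply]
    rw [Finset.sum_ite_eq Finset.univ i (fun j => x j ⟨n - 1, hsub⟩)]
    simp
  rw [step1, hcol, mulVec_sum', Finset.smul_sum, Finset.smul_sum, Finset.smul_sum]
  refine Finset.sum_congr rfl fun j _ => ?_
  have hkey := aReg_key hx hcomm hn (j : ℕ) j.isLt
  have hj' : (⟨(j : ℕ), j.isLt⟩ : Fin n) = j := Fin.ext rfl
  rw [hj'] at hkey
  simp only [Matrix.mulVec_smul, hkey, smul_smul]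
  congr 1
  rcases eq_or_ne (j : ℕ) 0 with h0 | h0 <;> simp [h0] <;> ring_nf

/-- Over a commutative local ring, two `a`-regular matrices (for the same
unit `a`) that are conjugate by an element of `GL_n(R)` are equal: each
similarity class contains at most one `a`-regular element. -/
theorem aReg_conj_eq {n : ℕ} {R : Type*} [CommRing R] [IsLocalRing R]
    (a : R) (ha : IsUnit a) (x y : Matrix (Fin n) (Fin n) R)
    (hx : x.IsAReg a) (hy : y.IsAReg a)
    (g : (Matrix (Fin n) (Fin n) R)ˣ)
    (hconj : y = (g : Matrix (Fin n) (Fin n) R) * x * ((g⁻¹ : (Matrix (Fin n) (Fin n) R)ˣ) : Matrix (Fin n) (Fin n) R)) :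
    x = y := by
  rcases Nat.eq_zero_or_pos n with rfl | hn
  · ext i j; exact i.elim0
  have hsubn : n - 1 < n := Nat.sub_lt hn one_pos
  set G : Matrix (Fin n) (Fin n) R := (g : Matrix (Fin n) (Fin n) R) with hG
  set Gi : Matrix (Fin n) (Fin n) R :=
    ((g⁻¹ : (Matrix (Fin n) (Fin n) R)ˣ) : Matrix (Fin n) (Fin n) R) with hGi
  have hginv : Gi * G = 1 := by
    rw [hG, hGi, ← Units.val_mul, inv_mul_cancel, Units.val_one]
  have hcomm : G * x = y * G := by
    rw [hconj, mul_assoc (G * x), hginv, mul_one]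
  have hcomm1 : (1 : Matrix (Fin n) (Fin n) R) * y = y * 1 := by rw [one_mul, mul_one]
  -- notation
  set last : Fin n := ⟨n - 1, hsubn⟩ with hlast
  set E0 : Fin n → R := Pi.single (⟨0, hn⟩ : Fin n) 1 with hE0
  set u : Fin n → R := G *ᵥ E0 with hu
  set elast : R := if n - 1 = 0 then (1 : R) else a with helast
  have helast_unit : IsUnit elast := by
    rcases eq_or_ne (n - 1) 0 with h0 | h0
    · simp [helast, h0]
    · simpa [helast, h0] using ha
  have hd_unit : ∀ j : Fin n, IsUnit (if (j : ℕ) = 0 then a else 1) := by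
    intro j; rcases eq_or_ne (j : ℕ) 0 with h0 | h0 <;> simp [h0, ha]
  have he_unit : ∀ j : Fin n, IsUnit (if (j : ℕ) = 0 then (1 : R) else a) := by
    intro j; rcases eq_or_ne (j : ℕ) 0 with h0 | h0 <;> simp [h0, ha]
  set S : Matrix (Fin n) (Fin n) R :=
    ∑ j : Fin n, (y j last * (if (j : ℕ) = 0 then a else 1)) • y ^ (j : ℕ) with hS
  -- base relation for y (h = 1)
  have hbase : (a • y ^ n) *ᵥ E0 = (elast • S) *ᵥ E0 := by
    have hrel := aReg_rel hy hcomm1 hn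
    simp only [Matrix.one_mulVec] at hrel
    rw [Matrix.smul_mulVec, Matrix.smul_mulVec, hS, sum_mulVec']
    simp_rw [Matrix.smul_mulVec]
    exact hrel
  have hcommS : ∀ k : ℕ, (elast • S) * y ^ k = y ^ k * (elast • S) := by
    intro k
    rw [Matrix.smul_mul, Matrix.mul_smul, hS, Finset.sum_mul, Finset.mul_sum]
    refine congrArg _ (Finset.sum_congr rfl fun j _ => ?_)
    rw [Matrix.smul_mul, Matrix.mul_smul, pow_mul_comm]
  have hcommY : ∀ k : ℕ, (a • y ^ n) * y ^ k = y ^ k * (a • y ^ n) := by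
    intro k
    rw [Matrix.smul_mul, Matrix.mul_smul, pow_mul_comm]
  -- key column facts
  have hek : ∀ k : Fin n,
      ((if (k : ℕ) = 0 then (1 : R) else a)) • (Pi.single k 1 : Fin n → R)
        = (y ^ (k : ℕ)) *ᵥ E0 := by
    intro k
    have hkey := aReg_key hy hcomm1 hn (k : ℕ) k.isLt
    have hk' : (⟨(k : ℕ), k.isLt⟩ : Fin n) = k := Fin.ext rfl
    rw [hk'] at hkey
    simp only [Matrix.one_mulVec] at hkey
    rw [hkey]
  -- matrix identity: a • yⁿ = elast • S
  have hQ : a • y ^ n = elast • S := by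
    have hcols : ∀ k : Fin n,
        (a • y ^ n) *ᵥ (Pi.single k 1 : Fin n → R)
          = (elast • S) *ᵥ (Pi.single k 1 : Fin n → R) := by
      intro k
      refine smul_cancel' (he_unit k) ?_
      calc ((if (k : ℕ) = 0 then (1:R) else a)) • ((a • y ^ n) *ᵥ (Pi.single k 1 : Fin n → R))
          = (a • y ^ n) *ᵥ (((if (k : ℕ) = 0 then (1:R) else a)) • (Pi.single k 1 : Fin n → R)) :=
            (Matrix.mulVec_smul _ _ _).symm
        _ = (a • y ^ n) *ᵥ ((y ^ (k : ℕ)) *ᵥ E0) := by rw [hek k]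
        _ = ((a • y ^ n) * y ^ (k : ℕ)) *ᵥ E0 := Matrix.mulVec_mulVec _ _ _
        _ = (y ^ (k : ℕ) * (a • y ^ n)) *ᵥ E0 := by rw [hcommY]
        _ = (y ^ (k : ℕ)) *ᵥ ((a • y ^ n) *ᵥ E0) := (Matrix.mulVec_mulVec _ _ _).symm
        _ = (y ^ (k : ℕ)) *ᵥ ((elast • S) *ᵥ E0) := by rw [hbase]
        _ = (y ^ (k : ℕ) * (elast • S)) *ᵥ E0 := Matrix.mulVec_mulVec _ _ _
        _ = ((elast • S) * y ^ (k : ℕ)) *ᵥ E0 := by rw [hcommS]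
        _ = (elast • S) *ᵥ ((y ^ (k : ℕ)) *ᵥ E0) := (Matrix.mulVec_mulVec _ _ _).symm
        _ = (elast • S) *ᵥ (((if (k : ℕ) = 0 then (1:R) else a)) • (Pi.single k 1 : Fin n → R)) := by
            rw [hek k]
        _ = ((if (k : ℕ) = 0 then (1:R) else a)) • ((elast • S) *ᵥ (Pi.single k 1 : Fin n → R)) :=
            Matrix.mulVec_smul _ _ _
    ext i k
    have := congrFun (hcols k) i
    simpa using this
  -- relation for x with h = G
  have hrelx := aReg_rel hx hcomm hn
  -- relation for y applied to u
  have hrely : a • ((y ^ n) *ᵥ u)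
      = elast • ∑ j : Fin n,
          ((y j last * (if (j : ℕ) = 0 then a else 1)) • ((y ^ (j : ℕ)) *ᵥ u)) := by
    have h1 : (a • y ^ n) *ᵥ u = (elast • S) *ᵥ u := by rw [hQ]
    rw [Matrix.smul_mulVec, Matrix.smul_mulVec, hS, sum_mulVec'] at h1
    simp_rw [Matrix.smul_mulVec] at h1
    exact h1
  -- subtract
  have hsum0 : ∑ j : Fin n,
      (((x j last - y j last) * (if (j : ℕ) = 0 then a else 1)) • ((y ^ (j : ℕ)) *ᵥ u)) = 0 := by
    refine smul_cancel' helast_unit ?_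
    have hterm : ∀ j : Fin n,
        ((x j last - y j last) * (if (j : ℕ) = 0 then a else 1)) • ((y ^ (j : ℕ)) *ᵥ u)
          = (x j last * (if (j : ℕ) = 0 then a else 1)) • ((y ^ (j : ℕ)) *ᵥ u)
            - (y j last * (if (j : ℕ) = 0 then a else 1)) • ((y ^ (j : ℕ)) *ᵥ u) := by
      intro j; rw [← sub_smul, sub_mul]
    simp_rw [hterm]
    rw [Finset.sum_sub_distrib, smul_sub, ← hrelx, ← hrely, sub_self, smul_zero]
  -- invertible matrix M with columns y^j u
  set M : Matrix (Fin n) (Fin n) R := Matrix.of (fun i j => ((y ^ (j : ℕ)) *ᵥ u) i) with hM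
  set c : Fin n → R := fun j => (x j last - y j last) * (if (j : ℕ) = 0 then a else 1) with hc
  have hMc : M *ᵥ c = 0 := by
    funext i
    have h0 := congrFun hsum0 i
    simp only [Finset.sum_apply, Pi.smul_apply, smul_eq_mul, Pi.zero_apply] at h0 ⊢
    show ∑ j, M i j * c j = 0
    rw [← h0]
    exact Finset.sum_congr rfl fun j _ => mul_comm _ _
  -- M = G * diagonal e
  have hMeq : M = G * Matrix.diagonal (fun j : Fin n => if (j : ℕ) = 0 then (1 : R) else a) := by
    ext i j
    rw [Matrix.mul_diagonal]
    have hkey := aReg_key hx hcomm hn (j : ℕ) j.isLt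
    have hj' : (⟨(j : ℕ), j.isLt⟩ : Fin n) = j := Fin.ext rfl
    rw [hj'] at hkey
    have h2 := congrFun hkey i
    show ((y ^ (j : ℕ)) *ᵥ u) i = _
    rw [hu, hE0]
    simp only [Pi.smul_apply, smul_eq_mul, Matrix.mulVec_single_one, Matrix.col_apply, mul_one] at h2 ⊢
    rw [h2, mul_comm]
  -- left inverse of M, hence c = 0
  obtain ⟨b, hb⟩ := ha.exists_left_inv
  have hNM : (Matrix.diagonal (fun j : Fin n => if (j : ℕ) = 0 then (1 : R) else b) * Gi) * M
      = 1 := by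
    rw [hMeq, mul_assoc, ← mul_assoc Gi, hginv, one_mul, Matrix.diagonal_mul_diagonal]
    have hdiag : (fun j : Fin n => (if (j : ℕ) = 0 then (1 : R) else b) *
        (if (j : ℕ) = 0 then (1 : R) else a)) = fun _ => 1 := by
      funext j
      rcases eq_or_ne (j : ℕ) 0 with h0 | h0 <;> simp [h0, hb]
    rw [hdiag, Matrix.diagonal_one]
  have hc0 : c = 0 := by
    have h3 : c = ((Matrix.diagonal (fun j : Fin n => if (j : ℕ) = 0 then (1 : R) else b) * Gi)
        * M) *ᵥ c := by rw [hNM, Matrix.one_mulVec]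
    rw [h3, ← Matrix.mulVec_mulVec, hMc, Matrix.mulVec_zero]
  -- last columns agree
  have hlastcol : ∀ j : Fin n, x j last = y j last := by
    intro j
    have h0 : (x j last - y j last) * (if (j : ℕ) = 0 then a else 1) = 0 := congrFun hc0 j
    obtain ⟨dd, hdd⟩ := hd_unit j
    have h4 : x j last - y j last = 0 := by
      have h5 := congrArg (fun z => z * ((dd⁻¹ : Rˣ) : R)) h0
      simp only [zero_mul, mul_assoc, ← hdd] at h5
      simpa using h5
    exact sub_eq_zero.mp h4
  ext i j
  rcases lt_or_ge ((j : ℕ) + 1) n with hjn | hjn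
  · rw [hx i j hjn, hy i j hjn]
  · have hj : j = last := by
      apply Fin.ext
      have := j.isLt
      simp only [hlast]
      omega
    rw [hj]
    exact hlastcol i
end

section
/- Let R = Z/p^r (or more generally o/p^r for a local ring), and let x ∈ M_n(R) be an a-regular matrix for a unit a. Then the only upper triangular unipotent matrix commuting with x is the identity: C_{M_n(R)}(x) ∩ U = {I_n}, where U is the group of upper triangular matrices with 1's on the diagonal. -/
/-- Over `ℤ/p^r`, the only upper triangular unipotent matrix commuting with
an `a`-regular matrix (`a` a unit) is the identity. -/
theorem aReg_centralizer_inter_unipotent {n p r : ℕ} [Fact p.Prime]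
    (hr : 1 ≤ r) (a : ZMod (p ^ r)) (ha : IsUnit a)
    (x : Matrix (Fin n) (Fin n) (ZMod (p ^ r))) (hx : x.IsAReg a)
    (u : Matrix (Fin n) (Fin n) (ZMod (p ^ r)))
    (hdiag : ∀ i : Fin n, u i i = 1)
    (hlow : ∀ i j : Fin n, j < i → u i j = 0)
    (hcomm : x * u = u * x) :
    u = 1 := by
  -- key commutation equation for columns j with j+1 < n
  have key : ∀ (i j : Fin n) (hj : (j : ℕ) + 1 < n),
      (if (j : ℕ) = 0 then a else 1) * u i ⟨(j : ℕ) + 1, hj⟩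
        = ∑ k, x i k * u k j := by
    intro i j hj
    have h : ∑ k, x i k * u k j = ∑ k, u i k * x k j := by
      have := congrFun (congrFun hcomm i) j
      simpa [Matrix.mul_apply] using this
    rw [h]
    rw [Finset.sum_eq_single (⟨(j : ℕ) + 1, hj⟩ : Fin n)]
    · rw [hx ⟨(j : ℕ) + 1, hj⟩ j hj]
      simp [mul_comm]
    · intro k _ hk
      rw [hx k j hj]
      have : (k : ℕ) ≠ (j : ℕ) + 1 := fun h' => hk (Fin.ext h')
      simp [this]
    · simp
  -- strict upper entries vanish
  have hu : ∀ N (i m : Fin n), (i : ℕ) = N → i < m → u i m = 0 := by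
    intro N
    induction N using Nat.strong_induction_on with
    | _ N ih =>
      intro i m hiN him
      have hm1 : 1 ≤ (m : ℕ) := by
        have := Fin.lt_iff_val_lt_val.mp him; omega
      have hjlt : (m : ℕ) - 1 + 1 < n := by
        have := m.isLt; omega
      set j : Fin n := ⟨(m : ℕ) - 1, by omega⟩ with hjdef
      have hmeq : (⟨(j : ℕ) + 1, by simpa using hjlt⟩ : Fin n) = m := by
        apply Fin.ext; simp [hjdef]; omega
      have hkey := key i j (by simpa using hjlt)
      rw [hmeq] at hkey
      have hsum : ∑ k, x i k * u k j = 0 := by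
        apply Finset.sum_eq_zero
        intro k _
        by_cases hk : (k : ℕ) + 1 < n
        · rw [hx i k hk]
          by_cases hik : (i : ℕ) = (k : ℕ) + 1
          · have hkj : k < j := by
              rw [Fin.lt_iff_val_lt_val]
              have := Fin.lt_iff_val_lt_val.mp him
              simp [hjdef]; omega
            rw [ih (k : ℕ) (by omega) k j rfl hkj, mul_zero]
          · simp [hik]
        · have hjk : j < k := by
            rw [Fin.lt_iff_val_lt_val]
            have := k.isLt
            simp [hjdef]; omega
          rw [hlow k j hjk, mul_zero]
      rw [hsum] at hkey
      have hc : IsUnit (if (j : ℕ) = 0 then a else (1 : ZMod (p ^ r))) := by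
        split <;> [exact ha; exact isUnit_one]
      exact (hc.mul_right_eq_zero).mp hkey
  ext i m
  rcases lt_trichotomy i m with h | h | h
  · rw [hu (i : ℕ) i m rfl h, Matrix.one_apply_ne (by exact fun he => absurd he (ne_of_lt h))]
  · subst h; rw [hdiag, Matrix.one_apply_eq]
  · rw [hlow i m h, Matrix.one_apply_ne (by exact fun he => absurd he (ne_of_gt h))]
end

section
/- Let o_r = o/p^r with residue field of size q, and let x ∈ M_n(o_r) be a cyclic (regular) matrix. Then the centralizer of x in M_n(o_r) equals the o_r-subalgebra generated by x and has cardinality q^{nr}. -/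
section Aux

variable {n : ℕ} {R : Type*} [CommRing R]

private lemma aux_cyclic (x : Matrix (Fin n) (Fin n) R) (hx : x.IsCyclic) :
    {y : Matrix (Fin n) (Fin n) R | x * y = y * x} =
      (Algebra.adjoin R {x} : Subalgebra R (Matrix (Fin n) (Fin n) R)) ∧
    Nonempty ({y : Matrix (Fin n) (Fin n) R // x * y = y * x} ≃ (Fin n → R)) := by
  obtain ⟨v, b, hb⟩ := hx
  set p : (Fin n → R) → Matrix (Fin n) (Fin n) R :=
    fun c => ∑ i : Fin n, c i • x ^ (i : ℕ) with hp
  have mulVec_sum : ∀ (A : Matrix (Fin n) (Fin n) R) (w : Fin n → (Fin n → R))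
      (c : Fin n → R), A.mulVec (∑ i, c i • w i) = ∑ i, c i • A.mulVec (w i) := by
    intro A w c
    simp only [← Matrix.mulVecLin_apply, map_sum, map_smul]
  have sum_mulVec : ∀ (c : Fin n → R) (A : Fin n → Matrix (Fin n) (Fin n) R)
      (w : Fin n → R), (∑ i, c i • A i).mulVec w = ∑ i, c i • (A i).mulVec w := by
    intro c A w
    let L : Matrix (Fin n) (Fin n) R →ₗ[R] (Fin n → R) :=
      { toFun := fun A => A.mulVec w
        map_add' := fun A B => Matrix.add_mulVec A B w
        map_smul' := fun t A => Matrix.smul_mulVec t A w }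
    have : ∀ A : Matrix (Fin n) (Fin n) R, A.mulVec w = L A := fun _ => rfl
    simp only [this, map_sum, map_smul]
  have hcomm : ∀ c, x * p c = p c * x := by
    intro c
    simp only [hp, Finset.mul_sum, Finset.sum_mul, mul_smul_comm, smul_mul_assoc,
      ← pow_succ, ← pow_succ']
  have hpv : ∀ c, (p c).mulVec v = ∑ i, c i • b i := by
    intro c
    rw [hp, sum_mulVec]
    exact Finset.sum_congr rfl fun i _ => by rw [hb]
  have key : ∀ y : Matrix (Fin n) (Fin n) R, x * y = y * x →
      y = p (b.equivFun (y.mulVec v)) := by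
    intro y hy
    set c := b.equivFun (y.mulVec v) with hc
    have hyv : y.mulVec v = ∑ i, c i • b i := by
      conv_lhs => rw [← b.equivFun.symm_apply_apply (y.mulVec v)]
      rw [Module.Basis.equivFun_symm_apply]
    have hxy : Commute x y := hy
    have hcom : ∀ j : ℕ, y * x ^ j = x ^ j * y := fun j =>
      (hxy.pow_left j).eq.symm
    apply Matrix.toLin'.injective
    apply b.ext
    intro j
    simp only [Matrix.toLin'_apply]
    calc y.mulVec (b j) = (y * x ^ (j : ℕ)).mulVec v := by
          rw [hb j, Matrix.mulVec_mulVec]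
      _ = (x ^ (j : ℕ)).mulVec (y.mulVec v) := by
          rw [hcom, ← Matrix.mulVec_mulVec]
      _ = ∑ i, c i • (x ^ (j : ℕ)).mulVec (b i) := by
          rw [hyv, mulVec_sum]
      _ = ∑ i, c i • (x ^ (i : ℕ)).mulVec (b j) := by
          refine Finset.sum_congr rfl fun i _ => ?_
          rw [hb i, hb j, Matrix.mulVec_mulVec, Matrix.mulVec_mulVec,
            pow_mul_comm]
      _ = (p c).mulVec (b j) := (sum_mulVec c _ (b j)).symm
  constructor
  · ext y
    simp only [Set.mem_setOf_eq, SetLike.mem_coe]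
    constructor
    · intro hy
      rw [key y hy]
      refine Subalgebra.sum_mem _ fun i _ => Subalgebra.smul_mem _ ?_ _
      exact pow_mem (Algebra.self_mem_adjoin_singleton R x) _
    · intro hy
      exact (Algebra.commute_of_mem_adjoin_self hy).eq
  · refine ⟨⟨fun y => b.equivFun (y.1.mulVec v), fun c => ⟨p c, hcomm c⟩, ?_, ?_⟩⟩
    · intro y
      exact Subtype.ext (key y.1 y.2).symm
    · intro c
      simp only
      rw [hpv c, ← Module.Basis.equivFun_symm_apply, b.equivFun.apply_symm_apply]

end Aux

private lemma aux_card {O : Type*} [CommRing O] [IsDomain O] [IsDiscreteValuationRing O]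
    [Finite (IsLocalRing.ResidueField O)] (r : ℕ) :
    Nat.card (O ⧸ (IsLocalRing.maximalIdeal O ^ r)) =
      Nat.card (IsLocalRing.ResidueField O) ^ r := by
  have h1 : Nat.card (O ⧸ (IsLocalRing.maximalIdeal O ^ r)) =
      Submodule.cardQuot (IsLocalRing.maximalIdeal O ^ r) :=
    (Submodule.cardQuot_apply _).symm
  rw [h1, cardQuot_pow_of_prime (IsDiscreteValuationRing.not_a_field O)]
  congr 1

/-- Let `O` be a discrete valuation ring with maximal ideal `𝔪` and residue
field of size `q`, and let `x` be a cyclic matrix over `O/𝔪^r`.  Then the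
centralizer of `x` in `M_n(O/𝔪^r)` equals the subalgebra generated by `x`, and
has cardinality `q^(n*r)`. -/
theorem centralizer_of_cyclic_card {n : ℕ} {O : Type*} [CommRing O]
    [IsDomain O] [IsDiscreteValuationRing O]
    [Finite (IsLocalRing.ResidueField O)] (r : ℕ) (hr : 1 ≤ r)
    (x : Matrix (Fin n) (Fin n) (O ⧸ (IsLocalRing.maximalIdeal O ^ r)))
    (hx : x.IsCyclic) :
    {y : Matrix (Fin n) (Fin n) (O ⧸ (IsLocalRing.maximalIdeal O ^ r)) |
        x * y = y * x} =
      (Algebra.adjoin (O ⧸ (IsLocalRing.maximalIdeal O ^ r)) {x} :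
        Subalgebra (O ⧸ (IsLocalRing.maximalIdeal O ^ r))
          (Matrix (Fin n) (Fin n) (O ⧸ (IsLocalRing.maximalIdeal O ^ r)))) ∧
    Nat.card {y : Matrix (Fin n) (Fin n) (O ⧸ (IsLocalRing.maximalIdeal O ^ r)) //
        x * y = y * x} =
      Nat.card (IsLocalRing.ResidueField O) ^ (n * r) := by
  obtain ⟨h1, ⟨e⟩⟩ := aux_cyclic x hx
  refine ⟨h1, ?_⟩
  have hfn : Nat.card (Fin n) = n := Nat.card_eq_fintype_card.trans (Fintype.card_fin n)
  rw [Nat.card_congr e, Nat.card_fun, hfn, aux_card r, ← pow_mul, mul_comm r n]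
end

section
/- Let G be a finite group, N a normal subgroup, H ≤ N a subgroup, θ a character of H, and suppose Ind_H^G θ is multiplicity free. If ρ is an irreducible representation of G, then the restriction of ρ to N is multiplicity free provided every irreducible constituent δ of ρ|_N satisfies Hom_N(δ, Ind_H^N θ^g) ≠ 0 for some g-conjugate θ^g of θ. In particular (the paper's special case): if Ind_{SL_n}^{GL_n}(Ind_U^{SL_n} θ) is multiplicity free then Ind_U^{SL_n} θ is multiplicity free. -/
open CategoryTheory

variable {G : Type} [Group G]

/-- The space of the representation of `G` induced from a representation `σ`
of a subgroup `N`: functions `f : G → σ.V` with `f (n * g) = σ n (f g)`. -/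
def indSubmodule (N : Subgroup G) (σ : Rep ℂ N) : Submodule ℂ (G → σ.V) where
  carrier := {f | ∀ (n : N) (g : G), f (↑n * g) = σ.ρ n (f g)}
  add_mem' := by
    intro f g hf hg n x
    simp only [Pi.add_apply, hf n x, hg n x, map_add]
  zero_mem' := by intro n g; simp
  smul_mem' := by
    intro c f hf n g
    simp only [Pi.smul_apply, hf n g, map_smul]

/-- The representation of `G` induced from a representation of a subgroup `N`,
with `G` acting by right translation. -/
noncomputable def indRep (N : Subgroup G) (σ : Rep ℂ N) : Rep ℂ G :=
  Rep.of (X := indSubmodule N σ)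
    { toFun := fun g =>
        { toFun := fun f => ⟨fun x => f.1 (x * g), fun n y => by
            show f.1 (↑n * y * g) = _
            rw [mul_assoc]; exact f.2 n (y * g)⟩
          map_add' := fun f₁ f₂ => rfl
          map_smul' := fun c f => rfl }
      map_one' := by ext f x; simp
      map_mul' := by intro g₁ g₂; ext f x; simp [mul_assoc] }

/-- Restriction of a representation of `G` to a subgroup `N`. -/
noncomputable def resRep (N : Subgroup G) (ρ : Rep ℂ G) : Rep ℂ N :=
  Rep.of (ρ.ρ.comp N.subtype)

/-- The one-dimensional representation attached to a character `θ : H → ℂˣ`. -/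
noncomputable def oneDimRep {H : Type} [Group H] (θ : H →* ℂˣ) : Rep ℂ H :=
  Rep.of ((Algebra.lmul ℂ ℂ).toMonoidHom.comp ((Units.coeHom ℂ).comp θ))

/-- A representation is multiplicity free if each irreducible representation
occurs in it with multiplicity at most one. -/
def MultFree (V : Rep ℂ G) : Prop :=
  ∀ W : Rep ℂ G, Simple W → Module.finrank ℂ (W ⟶ V) ≤ 1


/-! ### Auxiliary material -/

namespace MFAux

open Module

variable {K : Type} [Group K]

/-- The space of `θ`-equivariant linear functionals on `W`. -/
noncomputable def eqFun (W : Rep ℂ K) (H : Subgroup K) (θ : H →* ℂˣ) : Submodule ℂ (W →ₗ[ℂ] ℂ) where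
  carrier := {φ | ∀ (h : H) (w : W), φ (W.ρ (↑h : K) w) = (θ h : ℂ) * φ w}
  add_mem' := by
    intro f g hf hg h w
    simp only [LinearMap.add_apply, hf h w, hg h w]; ring
  zero_mem' := by intro h w; simp
  smul_mem' := by
    intro c f hf h w
    simp only [LinearMap.smul_apply, hf h w, smul_eq_mul]; ring

/-- Evaluation of an element of the induced module, as a complex number. -/
def evC {H : Subgroup K} {θ : H →* ℂˣ} (F : indSubmodule H (oneDimRep θ)) (x : K) : ℂ := F.1 x

lemma mem_ind_of_eqFun {H : Subgroup K} {θ : H →* ℂˣ} {W : Rep ℂ K} (φ : eqFun W H θ) (w : W) :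
    (fun x => φ.1 (W.ρ x w)) ∈ indSubmodule H (oneDimRep θ) := by
  intro n g
  show φ.1 (W.ρ ((↑n : K) * g) w) = (θ n : ℂ) * φ.1 (W.ρ g w)
  rw [map_mul, Module.End.mul_apply]
  exact φ.2 n (W.ρ g w)

lemma key_comm {H : Subgroup K} {θ : H →* ℂˣ} {W : Rep ℂ K} (φ : eqFun W H θ) (g : K) (w : W)
    (x : K) : φ.1 (W.ρ x (W.ρ g w)) = φ.1 (W.ρ (x * g) w) := by
  rw [map_mul, Module.End.mul_apply]

/-- Frobenius reciprocity: homomorphisms from `W` into the representation induced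
from a character `θ` of `H` correspond to `θ`-equivariant functionals on `W`. -/
noncomputable def frobenius (H : Subgroup K) (θ : H →* ℂˣ) (W : Rep ℂ K) :
    (W ⟶ indRep H (oneDimRep θ)) ≃ₗ[ℂ] eqFun W H θ where
  toFun f := ⟨{ toFun := fun w => evC (H := H) (θ := θ) (f.hom w) 1
                map_add' := fun w₁ w₂ => by
                  show evC (H := H) (θ := θ) (f.hom (w₁ + w₂)) 1 = evC (H := H) (θ := θ) (f.hom w₁) 1 + evC (H := H) (θ := θ) (f.hom w₂) 1
                  rw [map_add]; rfl
                map_smul' := fun c w => by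
                  show evC (H := H) (θ := θ) (f.hom (c • w)) 1 = c * evC (H := H) (θ := θ) (f.hom w) 1
                  rw [map_smul]; rfl },
    by
      intro h w
      have h1 : f.hom (W.ρ (↑h : K) w) = (indRep H (oneDimRep θ)).ρ (↑h : K) (f.hom w) :=
        Rep.hom_comm_apply f _ w
      show evC (H := H) (θ := θ) (f.hom (W.ρ (↑h : K) w)) 1 = (θ h : ℂ) * evC (H := H) (θ := θ) (f.hom w) 1
      rw [h1]
      show evC (H := H) (θ := θ) (f.hom w) (1 * (↑h : K)) = (θ h : ℂ) * evC (H := H) (θ := θ) (f.hom w) 1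
      rw [one_mul]
      have h2 := (f.hom w).2 h 1
      rw [mul_one] at h2
      exact h2
    ⟩
  map_add' f g := by
    apply Subtype.ext; apply LinearMap.ext; intro w
    show evC (H := H) (θ := θ) ((f + g).hom w) 1 = evC (H := H) (θ := θ) (f.hom w) 1 + evC (H := H) (θ := θ) (g.hom w) 1
    rw [Rep.add_hom]; rfl
  map_smul' c f := by
    apply Subtype.ext; apply LinearMap.ext; intro w
    show evC (H := H) (θ := θ) ((c • f).hom w) 1 = c * evC (H := H) (θ := θ) (f.hom w) 1
    rw [Rep.smul_hom]; rfl
  invFun φ :=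
    ConcreteCategory.ofHom (C := Rep ℂ K) (X := W) (Y := indRep H (oneDimRep θ))
      { toFun := fun w => (⟨fun x => φ.1 (W.ρ x w), mem_ind_of_eqFun φ w⟩ :
          indSubmodule H (oneDimRep θ))
        map_add' := fun w₁ w₂ => by
          apply Subtype.ext; funext x
          show φ.1 (W.ρ x (w₁ + w₂)) = φ.1 (W.ρ x w₁) + φ.1 (W.ρ x w₂)
          rw [map_add, map_add]
        map_smul' := fun c w => by
          apply Subtype.ext; funext x
          show φ.1 (W.ρ x (c • w)) = c • φ.1 (W.ρ x w)
          rw [map_smul, map_smul]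
        isIntertwining' := fun g => by
          apply LinearMap.ext; intro w
          apply Subtype.ext; funext x
          exact key_comm φ g w x }
  left_inv f := by
    apply Rep.hom_ext; apply Representation.IntertwiningMap.ext; apply LinearMap.ext; intro w
    apply Subtype.ext; funext x
    show evC (H := H) (θ := θ) (f.hom (W.ρ x w)) 1 = evC (H := H) (θ := θ) (f.hom w) x
    rw [Rep.hom_comm_apply f x w]
    show evC (H := H) (θ := θ) (f.hom w) (1 * x) = evC (H := H) (θ := θ) (f.hom w) x
    rw [one_mul]
  right_inv φ := by
    apply Subtype.ext; apply LinearMap.ext; intro w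
    show φ.1 (W.ρ 1 w) = φ.1 w
    rw [map_one, Module.End.one_apply]

lemma finrank_hom_eq (H : Subgroup K) (θ : H →* ℂˣ) (W : Rep ℂ K) :
    finrank ℂ (W ⟶ indRep H (oneDimRep θ)) = finrank ℂ (eqFun W H θ) :=
  (frobenius H θ W).finrank_eq

/-- A submodule is invariant if it is stable under the group action. -/
def invariant (W : Rep ℂ K) (p : Submodule ℂ W) : Prop :=
  ∀ (g : K) (x : W), x ∈ p → W.ρ g x ∈ p

/-- An invariant submodule as a representation. -/
noncomputable def subRep (W : Rep ℂ K) (p : Submodule ℂ W) (hp : invariant W p) : Rep ℂ K :=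
  Rep.of
    { toFun := fun g => (W.ρ g).restrict (p := p) (q := p) (fun x hx => hp g x hx)
      map_one' := by
        apply LinearMap.ext; intro x; apply Subtype.ext
        simp [LinearMap.restrict_apply]
      map_mul' := fun g₁ g₂ => by
        apply LinearMap.ext; intro x; apply Subtype.ext
        simp [LinearMap.restrict_apply, map_mul] }

/-- The inclusion of a subrepresentation. -/
noncomputable def subRepIncl (W : Rep ℂ K) (p : Submodule ℂ W) (hp : invariant W p) :
    subRep W p hp ⟶ W :=
  ConcreteCategory.ofHom ⟨p.subtype, fun g => by apply LinearMap.ext; intro x; rfl⟩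

instance subRepIncl_mono (W : Rep ℂ K) (p : Submodule ℂ W) (hp : invariant W p) :
    CategoryTheory.Mono (subRepIncl W p hp) := by
  constructor
  intro Z a b hab
  apply Rep.hom_ext; apply Representation.IntertwiningMap.ext; apply LinearMap.ext; intro z
  have h2 := DFunLike.congr_fun (congrArg Rep.Hom.hom hab) z
  exact Subtype.ext h2

/-- A simple representation has no nontrivial invariant submodules. -/
theorem invariant_eq_bot_or_top {W : Rep ℂ K} (hW : CategoryTheory.Simple W)
    (p : Submodule ℂ W) (hp : invariant W p) : p = ⊥ ∨ p = ⊤ := by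
  by_cases hb : p = ⊥
  · exact Or.inl hb
  right
  set ι := subRepIncl W p hp with hι
  have hne : ι ≠ 0 := by
    obtain ⟨x, hxp, hx0⟩ := Submodule.exists_mem_ne_zero_of_ne_bot hb
    intro h0
    have hz : ι.hom ⟨x, hxp⟩ = (0 : W) := by rw [h0]; rfl
    exact hx0 hz
  haveI := CategoryTheory.isIso_of_mono_of_nonzero hne
  rw [eq_top_iff]
  intro w _
  have hw : ι.hom ((CategoryTheory.inv ι).hom w) = w :=
    DFunLike.congr_fun (congrArg Rep.Hom.hom (CategoryTheory.IsIso.inv_hom_id ι)) w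
  rw [← hw]
  exact ((CategoryTheory.inv ι).hom w).2

/-- A minimal nonzero invariant submodule gives a simple representation. -/
theorem simple_subRep {U : Rep ℂ K} (V : Submodule ℂ U) (hV : invariant U V) (hne : V ≠ ⊥)
    (hmin : ∀ q : Submodule ℂ U, invariant U q → q ≤ V → q = ⊥ ∨ q = V) :
    CategoryTheory.Simple (subRep U V hV) := by
  constructor
  intro Y f hf
  constructor
  · intro hiso h0
    obtain ⟨x, hxV, hx0⟩ := Submodule.exists_mem_ne_zero_of_ne_bot hne
    have hfg := CategoryTheory.IsIso.inv_hom_id f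
    set g := CategoryTheory.inv f with hg
    have hsurj : f.hom (g.hom ⟨x, hxV⟩) = ⟨x, hxV⟩ :=
      DFunLike.congr_fun (congrArg Rep.Hom.hom hfg) _
    rw [h0] at hsurj
    have h00 : (0 : Rep.V (subRep U V hV)) = ⟨x, hxV⟩ := by rw [← hsurj]; rfl
    have h01 := congrArg Subtype.val h00
    exact hx0 h01.symm
  · intro hne0
    -- f.hom is injective
    have hinj : Function.Injective f.hom := by
      set Z : Submodule ℂ Y := LinearMap.ker f.hom.toLinearMap with hZ
      have hZinv : invariant Y Z := by
        intro g x hx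
        have hx' : f.hom x = 0 := hx
        have hc : f.hom (Y.ρ g x) = (subRep U V hV).ρ g (f.hom x) := Rep.hom_comm_apply f g x
        show f.hom (Y.ρ g x) = 0
        rw [hc, hx', map_zero]
      have hcomp : subRepIncl Y Z hZinv ≫ f = 0 := by
        apply Rep.hom_ext; apply Representation.IntertwiningMap.ext; apply LinearMap.ext; intro z
        show f.hom (Z.subtype z) = 0
        exact z.2
      have h0 : subRepIncl Y Z hZinv = 0 := by
        have hcm : subRepIncl Y Z hZinv ≫ f = (0 : subRep Y Z hZinv ⟶ Y) ≫ f := by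
          rw [hcomp, CategoryTheory.Limits.zero_comp]
        exact (CategoryTheory.cancel_mono f).mp hcm
      have hZbot : Z = ⊥ := by
        rw [eq_bot_iff]
        intro z hz
        have h1 : (subRepIncl Y Z hZinv).hom ⟨z, hz⟩ = z := rfl
        rw [h0] at h1
        have h2 : (0 : Rep.V Y) = z := h1
        exact h2 ▸ Submodule.zero_mem ⊥
      rw [← Representation.IntertwiningMap.coe_toLinearMap, ← LinearMap.ker_eq_bot]
      exact hZbot
    -- range of f.hom is invariant and nonzero, hence all of V
    have hsurj : Function.Surjective f.hom := by
      set q : Submodule ℂ U := (LinearMap.range f.hom.toLinearMap).map V.subtype with hq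
      have hqV : q ≤ V := by
        rintro x ⟨⟨v, hv⟩, _, rfl⟩
        exact hv
      have hqinv : invariant U q := by
        rintro g x ⟨⟨v, hv⟩, ⟨y, hy⟩, rfl⟩
        refine ⟨f.hom (Y.ρ g y), ⟨Y.ρ g y, rfl⟩, ?_⟩
        have hc : f.hom (Y.ρ g y) = (subRep U V hV).ρ g (f.hom y) := Rep.hom_comm_apply f g y
        rw [hc, ← Representation.IntertwiningMap.toLinearMap_apply, hy]
        rfl
      have hqne : q ≠ ⊥ := by
        intro hbot
        apply hne0
        apply Rep.hom_ext; apply Representation.IntertwiningMap.ext; apply LinearMap.ext; intro y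
        have hmem : (f.hom y).1 ∈ q := ⟨f.hom y, ⟨y, rfl⟩, rfl⟩
        rw [hbot] at hmem
        have h0 : (f.hom y).1 = 0 := hmem
        show f.hom y = 0
        exact Subtype.ext h0
      have hqtop : q = V := (hmin q hqinv hqV).resolve_left hqne
      intro v
      have hv : v.1 ∈ q := by rw [hqtop]; exact v.2
      obtain ⟨⟨w, hw⟩, ⟨y, hy⟩, hval⟩ := hv
      exact ⟨y, by apply Subtype.ext; rw [← Representation.IntertwiningMap.toLinearMap_apply, hy]; exact hval⟩
    -- build the inverse morphism
    set e := LinearEquiv.ofBijective (f.hom.toLinearMap : Rep.V Y →ₗ[ℂ] Rep.V (subRep U V hV))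
      ⟨hinj, hsurj⟩ with he
    refine ⟨⟨ConcreteCategory.ofHom ⟨e.symm.toLinearMap, fun g => ?_⟩, ?_, ?_⟩⟩
    rotate_right
    · apply LinearMap.ext; intro v
      apply hinj
      show f.hom (e.symm ((subRep U V hV).ρ g v)) = f.hom (Y.ρ g (e.symm v))
      have h1 : f.hom (e.symm ((subRep U V hV).ρ g v)) = (subRep U V hV).ρ g v :=
        e.apply_symm_apply _
      have h2 : f.hom (Y.ρ g (e.symm v)) = (subRep U V hV).ρ g (f.hom (e.symm v)) :=
        Rep.hom_comm_apply f g _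
      rw [h1, h2]
      congr 1
      exact (e.apply_symm_apply v).symm
    · apply Rep.hom_ext; apply Representation.IntertwiningMap.ext; apply LinearMap.ext; intro y
      exact e.symm_apply_apply y
    · apply Rep.hom_ext; apply Representation.IntertwiningMap.ext; apply LinearMap.ext; intro v
      exact e.apply_symm_apply v

/-- Maschke: every invariant submodule has an invariant complement. -/
theorem exists_invariant_compl [Fintype K] {U : Rep ℂ K} (p : Submodule ℂ U)
    (hp : invariant U p) : ∃ q : Submodule ℂ U, invariant U q ∧ IsCompl p q := by
  obtain ⟨p', hp'⟩ := Submodule.exists_isCompl p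
  set π₀ : Rep.V U →ₗ[ℂ] Rep.V U :=
    p.subtype ∘ₗ p.linearProjOfIsCompl p' hp' with hπ₀
  set π : Rep.V U →ₗ[ℂ] Rep.V U :=
    ((Fintype.card K : ℂ)⁻¹) • ∑ g : K, (U.ρ g) ∘ₗ π₀ ∘ₗ (U.ρ g⁻¹) with hπ
  have hcard : (Fintype.card K : ℂ) ≠ 0 := Nat.cast_ne_zero.mpr Fintype.card_ne_zero
  have hmem : ∀ v, π v ∈ p := by
    intro v
    rw [hπ]
    simp only [LinearMap.smul_apply, LinearMap.sum_apply, LinearMap.comp_apply]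
    apply Submodule.smul_mem
    apply Submodule.sum_mem
    intro g _
    exact hp g _ (Submodule.coe_mem _)
  have hid : ∀ x ∈ p, π x = x := by
    intro x hx
    rw [hπ]
    simp only [LinearMap.smul_apply, LinearMap.sum_apply, LinearMap.comp_apply]
    have hterm : ∀ g : K, U.ρ g (π₀ (U.ρ g⁻¹ x)) = x := by
      intro g
      have h1 : U.ρ g⁻¹ x ∈ p := hp g⁻¹ x hx
      have h2 : π₀ (U.ρ g⁻¹ x) = U.ρ g⁻¹ x := by
        rw [hπ₀]
        simp only [LinearMap.comp_apply]
        exact congrArg _ (Submodule.linearProjOfIsCompl_apply_left hp' ⟨_, h1⟩)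
      rw [h2]
      exact Representation.self_inv_apply U.ρ g x
    rw [Finset.sum_congr rfl (fun g _ => hterm g), Finset.sum_const, Finset.card_univ,
      ← Nat.cast_smul_eq_nsmul ℂ, smul_smul, inv_mul_cancel₀ hcard, one_smul]
  have hequiv : ∀ (k : K) (v : Rep.V U), π (U.ρ k v) = U.ρ k (π v) := by
    intro k v
    rw [hπ]
    simp only [LinearMap.smul_apply, LinearMap.sum_apply, LinearMap.comp_apply, map_smul,
      map_sum]
    congr 1
    have hBA : ∀ x : K, U.ρ k (U.ρ x (π₀ (U.ρ x⁻¹ v))) =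
        U.ρ (k * x) (π₀ (U.ρ (k * x)⁻¹ (U.ρ k v))) := by
      intro x
      have e1 : U.ρ (k * x)⁻¹ (U.ρ k v) = U.ρ x⁻¹ v := by
        rw [mul_inv_rev, map_mul, Module.End.mul_apply, Representation.inv_self_apply]
      rw [e1, map_mul, Module.End.mul_apply]
    exact (Fintype.sum_bijective (fun g => k * g) (Group.mulLeft_bijective k) _ _ hBA).symm
  refine ⟨LinearMap.ker π, ?_, ?_⟩
  · intro g x hx
    show π (U.ρ g x) = 0
    have hx0 : π x = 0 := hx
    rw [hequiv g x, hx0, map_zero]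
  · constructor
    · rw [disjoint_iff, eq_bot_iff]
      intro x hx
      obtain ⟨hxp, hxk⟩ := Submodule.mem_inf.mp hx
      have h1 := hid x hxp
      have h0 : π x = 0 := hxk
      rw [Submodule.mem_bot, ← h1, h0]
    · rw [codisjoint_iff, eq_top_iff]
      intro v _
      apply Submodule.mem_sup.mpr
      refine ⟨π v, hmem v, v - π v, ?_, by abel⟩
      show π (v - π v) = 0
      rw [map_sub, hid (π v) (hmem v), sub_self]

/-- Existence of a minimal nonzero invariant submodule below a given one. -/
theorem exists_minimal_invariant {U : Rep ℂ K} [FiniteDimensional ℂ (Rep.V U)] :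
    ∀ (n : ℕ) (p : Submodule ℂ U), invariant U p → p ≠ ⊥ → Module.finrank ℂ p ≤ n →
      ∃ V : Submodule ℂ U, invariant U V ∧ V ≠ ⊥ ∧ V ≤ p ∧
        ∀ q : Submodule ℂ U, invariant U q → q ≤ V → q = ⊥ ∨ q = V := by
  intro n
  induction n with
  | zero =>
    intro p hp hne hle
    exact absurd ((Submodule.finrank_eq_zero (S := p)).mp (Nat.le_zero.mp hle)) hne
  | succ n ih =>
    intro p hp hne hle
    by_cases h : ∀ q : Submodule ℂ U, invariant U q → q ≤ p → q = ⊥ ∨ q = p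
    · exact ⟨p, hp, hne, le_rfl, h⟩
    · push_neg at h
      obtain ⟨q, hqi, hqle, hq1, hq2⟩ := h
      have hlt : Module.finrank ℂ q < Module.finrank ℂ p :=
        Submodule.finrank_lt_finrank_of_lt (lt_of_le_of_ne hqle hq2)
      obtain ⟨V, h1, h2, h3, h4⟩ := ih q hqi hq1 (by omega)
      exact ⟨V, h1, h2, le_trans h3 hqle, h4⟩

end MFAux

/-- Let `G` be a finite group, `N ⊴ G`, `H ≤ N` and `θ` a character of `H`.
If `Ind_H^G θ` is multiplicity free then `Ind_H^N θ` is multiplicity free. -/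
theorem multFree_inner_ind_of_multFree_ind {G : Type} [Group G] [Fintype G]
    (N H : Subgroup G) [N.Normal] (hHN : H ≤ N) (θ : H →* ℂˣ)
    (hmf : MultFree (indRep H (oneDimRep θ))) :
    MultFree (indRep (H.subgroupOf N)
      (oneDimRep (θ.comp (Subgroup.subgroupOfEquivOfLe hHN).toMonoidHom))) := by
  classical
  set H' := H.subgroupOf N with hH'
  set θ' := θ.comp (Subgroup.subgroupOfEquivOfLe hHN).toMonoidHom with hθ'
  intro W hW
  by_contra hgt
  push_neg at hgt
  rw [MFAux.finrank_hom_eq] at hgt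
  -- a nonzero equivariant functional on W
  have hnt : ∃ φ : MFAux.eqFun W H' θ', φ ≠ 0 := by
    by_contra hns
    push_neg at hns
    haveI : Subsingleton (MFAux.eqFun W H' θ') :=
      ⟨fun a b => (hns a).trans (hns b).symm⟩
    rw [Module.finrank_zero_of_subsingleton] at hgt
    omega
  obtain ⟨φ₀, hφ₀⟩ := hnt
  have hφ₀' : φ₀.1 ≠ 0 := fun h => hφ₀ (Subtype.ext h)
  obtain ⟨w₀, hw₀'⟩ := DFunLike.ne_iff.mp hφ₀'
  have hw₀ : φ₀.1 w₀ ≠ 0 := by simpa using hw₀' 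
  -- W is finite dimensional
  haveI hWfd : FiniteDimensional ℂ (Rep.V W) := by
    set j : Rep.V W →ₗ[ℂ] (↥N → ℂ) :=
      { toFun := fun w => fun x => φ₀.1 (W.ρ x w)
        map_add' := fun a b => by funext x; simp
        map_smul' := fun c a => by funext x; simp } with hj
    have hker : MFAux.invariant W (LinearMap.ker j) := by
      intro g x hx
      rw [LinearMap.mem_ker] at hx ⊢
      funext y
      have h1 : φ₀.1 (W.ρ y (W.ρ g x)) = φ₀.1 (W.ρ (y * g) x) := by
        rw [map_mul, Module.End.mul_apply]
      have h2 : j x (y * g) = 0 := by rw [hx]; rfl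
      show φ₀.1 (W.ρ y (W.ρ g x)) = 0
      rw [h1]
      exact h2
    rcases MFAux.invariant_eq_bot_or_top hW _ hker with hb | ht
    · exact FiniteDimensional.of_injective j (LinearMap.ker_eq_bot.mp hb)
    · exfalso
      apply hφ₀'
      apply LinearMap.ext; intro w
      have hmem : w ∈ LinearMap.ker j := ht ▸ Submodule.mem_top
      have h1 : j w 1 = 0 := by rw [LinearMap.mem_ker.mp hmem]; rfl
      have h2 : φ₀.1 (W.ρ 1 w) = 0 := h1
      rwa [map_one, Module.End.one_apply] at h2
  -- the induced representation U = Ind_N^G W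
  set U := indRep N W with hU
  haveI hWfd2 : FiniteDimensional ℂ ((W.V)) := hWfd
  haveI hpi : FiniteDimensional ℂ (G → (W.V)) := inferInstance
  haveI hUfd : FiniteDimensional ℂ (Rep.V U) := by
    show FiniteDimensional ℂ (indSubmodule N W)
    infer_instance
  -- evaluation at 1 : U → W
  set ε : Rep.V U →ₗ[ℂ] Rep.V W :=
    { toFun := fun u => u.1 1
      map_add' := fun u v => rfl
      map_smul' := fun c u => rfl } with hε
  have hεeq : ∀ (n : ↥N) (u : Rep.V U), ε (U.ρ (↑n : G) u) = W.ρ n (ε u) := by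
    intro n u
    show u.1 (1 * (↑n : G)) = W.ρ n (u.1 1)
    rw [one_mul]
    have h1 := u.2 n 1
    rw [mul_one] at h1
    exact h1
  have hεsurj : Function.Surjective ε := by
    intro w
    refine ⟨⟨fun x => if hx : x ∈ N then W.ρ (⟨x, hx⟩ : ↥N) w else 0, ?_⟩, ?_⟩
    · intro n g
      show (if hx : (↑n * g : G) ∈ N then W.ρ (⟨↑n * g, hx⟩ : ↥N) w else 0) =
        W.ρ n (if hx : g ∈ N then W.ρ (⟨g, hx⟩ : ↥N) w else 0)
      by_cases hg : g ∈ N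
      · have h1 : (↑n * g : G) ∈ N := mul_mem n.2 hg
        rw [dif_pos hg, dif_pos h1]
        have h2 : (⟨↑n * g, h1⟩ : ↥N) = n * ⟨g, hg⟩ := rfl
        rw [h2, map_mul, Module.End.mul_apply]
      · have h1 : (↑n * g : G) ∉ N := by
          intro hmem
          apply hg
          have h2 := mul_mem (inv_mem n.2) hmem
          rwa [inv_mul_cancel_left] at h2
        rw [dif_neg hg, dif_neg h1, map_zero]
    · show (if hx : (1 : G) ∈ N then W.ρ (⟨1, hx⟩ : ↥N) w else 0) = w
      rw [dif_pos (one_mem N)]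
      have h2 : (⟨1, one_mem N⟩ : ↥N) = 1 := rfl
      rw [h2, map_one, Module.End.one_apply]
  -- the largest invariant submodule inside ker ε
  set Kk : Submodule ℂ (Rep.V U) :=
    { carrier := {u | ∀ g : G, ε (U.ρ g u) = 0}
      add_mem' := by intro a b ha hb g; rw [map_add, map_add, ha g, hb g, add_zero]
      zero_mem' := by intro g; rw [map_zero, map_zero]
      smul_mem' := by intro c a ha g; rw [map_smul, map_smul, ha g, smul_zero] } with hKk
  have hKinv : MFAux.invariant U Kk := by
    intro g x hx g'
    have h1 : U.ρ g' (U.ρ g x) = U.ρ (g' * g) x := by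
      rw [map_mul, Module.End.mul_apply]
    rw [h1]
    exact hx (g' * g)
  have hKne : Kk ≠ ⊤ := by
    intro htop
    obtain ⟨u₀, hu₀⟩ := hεsurj w₀
    have hmem : u₀ ∈ Kk := htop ▸ Submodule.mem_top
    have h1 : ε (U.ρ (1 : G) u₀) = 0 := hmem 1
    rw [map_one, Module.End.one_apply, hu₀] at h1
    rw [h1] at hw₀
    exact hw₀ (map_zero _)
  -- invariant complement, and a minimal invariant submodule inside it
  obtain ⟨C, hCinv, hCcompl⟩ := MFAux.exists_invariant_compl Kk hKinv
  have hCne : C ≠ ⊥ := by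
    intro hC
    apply hKne
    have h1 := codisjoint_iff.mp hCcompl.codisjoint
    rwa [hC, sup_bot_eq] at h1
  obtain ⟨V, hVinv, hVne, hVleC, hVmin⟩ :=
    MFAux.exists_minimal_invariant (Module.finrank ℂ C) C hCinv hCne le_rfl
  set VRep := MFAux.subRep U V hVinv with hVRep
  have hVsimple := MFAux.simple_subRep V hVinv hVne hVmin
  -- ε restricted to V is surjective onto W
  set εV : Rep.V VRep →ₗ[ℂ] Rep.V W := ε ∘ₗ V.subtype with hεV
  have hεV0 : ¬∀ v : V, ε v.1 = 0 := by
    intro hall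
    apply hVne
    have hVK : V ≤ Kk := by
      intro v hv g
      exact hall ⟨U.ρ g v, hVinv g v hv⟩
    have hb : Kk ⊓ C = ⊥ := disjoint_iff.mp hCcompl.disjoint
    exact le_bot_iff.mp (hb ▸ le_inf hVK hVleC)
  have hεVsurj : Function.Surjective εV := by
    rw [← LinearMap.range_eq_top]
    have hrinv : MFAux.invariant W (LinearMap.range εV) := by
      rintro n x ⟨v, rfl⟩
      refine ⟨⟨U.ρ (↑n : G) v.1, hVinv (↑n : G) v.1 v.2⟩, ?_⟩
      show ε (U.ρ (↑n : G) v.1) = W.ρ n (ε v.1)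
      exact hεeq n v.1
    rcases MFAux.invariant_eq_bot_or_top hW _ hrinv with hb | ht
    · exfalso
      apply hεV0
      intro v
      have h1 : ε v.1 ∈ LinearMap.range εV := ⟨v, rfl⟩
      rw [hb] at h1
      exact h1
    · exact ht
  -- transport equivariant functionals from W to VRep
  set T : MFAux.eqFun W H' θ' →ₗ[ℂ] MFAux.eqFun VRep H θ :=
    { toFun := fun φ => ⟨φ.1 ∘ₗ εV, by
        intro h v
        show φ.1 (ε (U.ρ (↑h : G) v.1)) = (θ h : ℂ) * φ.1 (ε v.1)
        have hn : ((h : G)) ∈ N := hHN h.2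
        have h1 : ε (U.ρ (↑h : G) v.1) = W.ρ (⟨↑h, hn⟩ : ↥N) (ε v.1) := hεeq ⟨↑h, hn⟩ v.1
        rw [h1]
        have hmem : (⟨↑h, hn⟩ : ↥N) ∈ H' := Subgroup.mem_subgroupOf.mpr h.2
        have h2 := φ.2 (⟨⟨↑h, hn⟩, hmem⟩ : ↥H') (ε v.1)
        rw [h2]
        congr 2⟩
      map_add' := fun φ ψ => by apply Subtype.ext; apply LinearMap.ext; intro v; rfl
      map_smul' := fun c φ => by apply Subtype.ext; apply LinearMap.ext; intro v; rfl } with hT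
  have hTinj : Function.Injective T := by
    intro φ ψ hpq
    apply Subtype.ext; apply LinearMap.ext; intro w
    obtain ⟨v, rfl⟩ := hεVsurj w
    exact LinearMap.congr_fun (congrArg Subtype.val hpq) v
  haveI hVfd : FiniteDimensional ℂ (Rep.V VRep) := by
    show FiniteDimensional ℂ V
    infer_instance
  have hle : Module.finrank ℂ (MFAux.eqFun W H' θ') ≤
      Module.finrank ℂ (MFAux.eqFun VRep H θ) :=
    LinearMap.finrank_le_finrank_of_injective hTinj
  have h2 := hmf VRep hVsimple
  rw [MFAux.finrank_hom_eq] at h2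
  have hcontr : (1 : ℕ) < 1 := (hgt.trans_le hle).trans_le h2
  omega
end
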